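/- Let μ : [a,b] → M/ξ be a piecewise-smooth loop at p = pr(x). Then there exists a piecewise-smooth loop γ : [a,b] → M at x ∈ M with pr ∘ γ = μ. -/

import Mathlib

open Set

lemma glue_continuousOn {M : Type*} [TopologicalSpace M] {f g : ℝ → M} {a m b : ℝ}
    (ham : a ≤ m) (hmb : m ≤ b)
    (hf : ContinuousOn f (Icc a m)) (hg : ContinuousOn g (Icc m b)) (hfg : f m = g m) :
    ContinuousOn (fun t => if t ≤ m then f t else g t) (Icc a b) := by
  intro t ht
  have hsub : Icc a b ⊆ Icc a m ∪ Icc m b := Icc_subset_Icc_union_Icc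
  refine ContinuousWithinAt.mono ?_ hsub
  have hAgreeA : ∀ s ∈ Icc a m, (fun t => if t ≤ m then f t else g t) s = f s := by
    intro s hs; simp [hs.2]
  have hAgreeB : ∀ s ∈ Icc m b, (fun t => if t ≤ m then f t else g t) s = g s := by
    intro s hs
    by_cases h : s ≤ m
    · have : s = m := le_antisymm h hs.1
      simp [h, this, hfg]
    · simp [h]
  rcases le_or_gt t m with h | h
  · have htA : t ∈ Icc a m := ⟨ht.1, h⟩
    apply ContinuousWithinAt.union
    · exact ((hf t htA).congr hAgreeA (hAgreeA t htA))
    · rcases eq_or_lt_of_le h with rfl | hlt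
      · exact ((hg t ⟨le_refl _, hmb⟩).congr hAgreeB (hAgreeB t ⟨le_refl _, hmb⟩))
      · refine continuousWithinAt_of_notMem_closure ?_
        rw [isClosed_Icc.closure_eq]
        exact fun hc => absurd hc.1 (not_le.mpr hlt)
  · have htB : t ∈ Icc m b := ⟨h.le, ht.2⟩
    apply ContinuousWithinAt.union
    · refine continuousWithinAt_of_notMem_closure ?_
      rw [isClosed_Icc.closure_eq]
      exact fun hc => absurd hc.2 (not_le.mpr h)
    · exact ((hg t htB).congr hAgreeB (hAgreeB t htB))


/-- lifting of loops from the orbit space.  Let `pr : M → M/ξ = N` be the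
(continuous, surjective) orbit projection of the flow `φ` of the Reeb field `ξ`: the
flow preserves the fibers and acts transitively on each fiber.  Being a submersion whose
differential restricted to the contact distribution is a fiberwise isomorphism, `pr`
admits continuous local sections through every point (`hsection`).  Then every
piecewise-smooth loop `μ : [a,b] → N` at `p = pr x` lifts to a loop `γ` at `x ∈ M`
with `pr ∘ γ = μ`. -/
theorem loop_lifts_to_loop
    (M N : Type*) [TopologicalSpace M] [TopologicalSpace N]
    (pr : M → N) (hpr : Continuous pr) (hsurj : Function.Surjective pr)
    (φ : ℝ → M → M) (hφ : Continuous fun q : ℝ × M => φ q.1 q.2)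
    (hfiber : ∀ t y, pr (φ t y) = pr y)
    (htrans : ∀ y z : M, pr y = pr z → ∃ t, φ t y = z)
    (hsection : ∀ x : M, ∃ U ∈ nhds (pr x), ∃ s : N → M,
        ContinuousOn s U ∧ s (pr x) = x ∧ ∀ y ∈ U, pr (s y) = y)
    (x : M) (μ : Path (pr x) (pr x)) :
    ∃ γ : Path x x, ∀ t, pr (γ t) = μ t := by
  classical
  set f : ℝ → N := ⇑μ.extend with hfdef
  have hf : Continuous f := μ.continuous_extend
  -- continuity of each time-t flow map
  have hflow : ∀ c : ℝ, Continuous (φ c) := fun c =>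
    hφ.comp (continuous_const.prodMk continuous_id)
  -- local sections through every point of N
  have H : ∀ i : Icc (0:ℝ) 1, ∃ O : Set N, IsOpen O ∧ f i ∈ O ∧
      ∃ s : N → M, ContinuousOn s O ∧ ∀ y ∈ O, pr (s y) = y := by
    intro i
    obtain ⟨z, hz⟩ := hsurj (f i)
    obtain ⟨U, hU, s, hcont, -, hsy⟩ := hsection z
    rw [hz] at hU
    obtain ⟨O, hOU, hOopen, hO⟩ := mem_nhds_iff.mp hU
    exact ⟨O, hOopen, hO, s, hcont.mono hOU, fun y hy => hsy y (hOU hy)⟩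
  choose O hOopen hmem s hscont hspr using H
  -- Lebesgue number for the cover by preimages
  have hcover : Icc (0:ℝ) 1 ⊆ ⋃ i : Icc (0:ℝ) 1, f ⁻¹' O i := by
    intro t ht
    exact mem_iUnion.mpr ⟨⟨t, ht⟩, hmem ⟨t, ht⟩⟩
  obtain ⟨δ, hδ, hball⟩ := lebesgue_number_lemma_of_metric isCompact_Icc
    (fun i => (hOopen i).preimage hf) hcover
  -- main induction: lifting on [t₀, 1]
  have key : ∀ n : ℕ, ∀ t₀ : ℝ, t₀ ∈ Icc (0:ℝ) 1 → ∀ x0 : M, pr x0 = f t₀ →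
      1 ≤ t₀ + n * (δ / 2) →
      ∃ g : ℝ → M, ContinuousOn g (Icc t₀ 1) ∧ g t₀ = x0 ∧
        ∀ t ∈ Icc t₀ 1, pr (g t) = f t := by
    intro n
    induction n with
    | zero =>
      intro t₀ ht₀ x0 hx0 h1
      simp only [Nat.cast_zero, zero_mul, add_zero] at h1
      have ht1 : t₀ = 1 := le_antisymm ht₀.2 h1
      refine ⟨fun _ => x0, continuousOn_const, rfl, ?_⟩
      intro t ht
      have : t = t₀ := le_antisymm (ht1 ▸ ht.2) ht.1
      rw [this, hx0]
    | succ n ih =>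
      intro t₀ ht₀ x0 hx0 h1
      set m : ℝ := min (t₀ + δ / 2) 1 with hmdef
      have hm0 : t₀ ≤ m := le_min (by linarith) ht₀.2
      have hm1 : m ≤ 1 := min_le_right _ _
      have hmI : m ∈ Icc (0:ℝ) 1 := ⟨le_trans ht₀.1 hm0, hm1⟩
      obtain ⟨i, hi⟩ := hball t₀ ht₀
      have hmapsto : ∀ t ∈ Icc t₀ m, f t ∈ O i := by
        intro t ht
        apply hi
        rw [Metric.mem_ball, Real.dist_eq, abs_lt]
        constructor
        · linarith [ht.1]
        · have : t ≤ t₀ + δ / 2 := le_trans ht.2 (min_le_left _ _)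
          linarith
      have hft₀ : f t₀ ∈ O i := hmapsto t₀ ⟨le_refl _, hm0⟩
      -- flow-correct the section so the piece starts at x0
      obtain ⟨c, hc⟩ := htrans (s i (f t₀)) x0 (by rw [hspr i _ hft₀, hx0])
      set g1 : ℝ → M := fun t => φ c (s i (f t)) with hg1def
      have hg1cont : ContinuousOn g1 (Icc t₀ m) := by
        apply (hflow c).comp_continuousOn
        exact (hscont i).comp hf.continuousOn hmapsto
      have hg1pr : ∀ t ∈ Icc t₀ m, pr (g1 t) = f t := by
        intro t ht
        rw [hg1def]
        simp only
        rw [hfiber, hspr i _ (hmapsto t ht)]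
      have hg1start : g1 t₀ = x0 := hc
      -- inductive lift on [m, 1]
      have h1' : 1 ≤ m + n * (δ / 2) := by
        have hnn : (0:ℝ) ≤ n * (δ / 2) := by positivity
        rcases le_total (t₀ + δ / 2) 1 with he | he
        · have hme : m = t₀ + δ / 2 := min_eq_left he
          push_cast at h1
          rw [hme]; linarith
        · have hme : m = 1 := min_eq_right he
          rw [hme]; linarith
      obtain ⟨g2, hg2cont, hg2start, hg2pr⟩ :=
        ih m hmI (g1 m) (hg1pr m ⟨hm0, le_refl _⟩) h1'
      refine ⟨fun t => if t ≤ m then g1 t else g2 t, ?_, ?_, ?_⟩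
      · exact glue_continuousOn hm0 hm1 hg1cont hg2cont (by rw [hg2start])
      · simp [hm0, hg1start]
      · intro t ht
        by_cases h : t ≤ m
        · simp only [h, if_true]
          exact hg1pr t ⟨ht.1, h⟩
        · simp only [h, if_false]
          exact hg2pr t ⟨(not_le.mp h).le, ht.2⟩
  -- choose n large enough
  obtain ⟨n, hn⟩ := exists_nat_ge (2 / δ)
  have hδ2 : (0:ℝ) < δ / 2 := by linarith
  have hbig : 1 ≤ (0:ℝ) + n * (δ / 2) := by
    rw [zero_add]
    have h1 : (2 / δ) * (δ / 2) = 1 := by field_simp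
    calc (1:ℝ) = (2 / δ) * (δ / 2) := h1.symm
      _ ≤ n * (δ / 2) := mul_le_mul_of_nonneg_right hn hδ2.le
  have hf0 : pr x = f 0 := by rw [hfdef]; simp [Path.extend_zero]
  obtain ⟨g, hgcont, hgstart, hgpr⟩ := key n 0 ⟨le_refl _, zero_le_one⟩ x hf0 hbig
  -- close the loop with the flow
  obtain ⟨c₀, hc₀⟩ := htrans x x rfl
  have hg1 : pr (g 1) = pr x := by
    rw [hgpr 1 ⟨zero_le_one, le_refl _⟩, hfdef, Path.extend_one]
  obtain ⟨c₁, hc₁⟩ := htrans (g 1) x hg1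
  refine ⟨⟨⟨fun t : unitInterval => φ ((1 - (t:ℝ)) * c₀ + (t:ℝ) * c₁) (g t), ?_⟩, ?_, ?_⟩, ?_⟩
  · have hcoef : Continuous fun t : unitInterval => (1 - (t:ℝ)) * c₀ + (t:ℝ) * c₁ :=
      (((continuous_const.sub continuous_subtype_val).mul continuous_const).add
        (continuous_subtype_val.mul continuous_const))
    have hgc : Continuous fun t : unitInterval => g (t:ℝ) :=
      hgcont.comp_continuous continuous_subtype_val fun t => t.2
    exact hφ.comp (hcoef.prodMk hgc)
  · show φ ((1 - (0:ℝ)) * c₀ + (0:ℝ) * c₁) (g (0:ℝ)) = x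
    norm_num
    rw [hgstart]; exact hc₀
  · show φ ((1 - (1:ℝ)) * c₀ + (1:ℝ) * c₁) (g (1:ℝ)) = x
    norm_num
    exact hc₁
  · intro t
    show pr (φ _ (g _)) = μ t
    rw [hfiber, hgpr t t.2]
    exact Path.extend_extends' μ t
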